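/- If the difference inclusion generated by matrices A_1, …, A_M ∈ ℝ^{n×n} is strongly convergent, then it admits a weak polyhedral Lyapunov function: there exist finitely many vectors f_1, …, f_s ∈ ℝⁿ spanning ℝⁿ such that the function V(x) := max_{1 ≤ j ≤ s} |⟨f_j, x⟩| satisfies V(Aᵢ x) ≤ V(x) for every i ∈ {1, …, M} and every x ∈ ℝⁿ. -/

import Mathlib

open Matrix Filter

/-- `w` lies in the unit simplex `W ⊆ ℝ^M`. -/
def InSimplex {M : ℕ} (w : Fin M → ℝ) : Prop :=
  (∀ i, 0 ≤ w i) ∧ ∑ i, w i = 1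

/-- The convex combination `A(w) = ∑ᵢ wᵢ Aᵢ`. -/
def Amix {n M : ℕ} (A : Fin M → Matrix (Fin n) (Fin n) ℝ) (w : Fin M → ℝ) :
    Matrix (Fin n) (Fin n) ℝ :=
  ∑ i, w i • A i

/-- `x` is a solution of the difference inclusion generated by `A₁, …, A_M`. -/
def IsInclusionSolution {n M : ℕ} (A : Fin M → Matrix (Fin n) (Fin n) ℝ)
    (x : ℕ → Fin n → ℝ) : Prop :=
  ∃ w : ℕ → Fin M → ℝ, (∀ k, InSimplex (w k)) ∧
    ∀ k, x (k + 1) = (Amix A (w k)) *ᵥ (x k)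

/-- Weak convergence: every solution of the difference inclusion has a limit. -/
def WeaklyConvergent {n M : ℕ} (A : Fin M → Matrix (Fin n) (Fin n) ℝ) : Prop :=
  ∀ x : ℕ → Fin n → ℝ, IsInclusionSolution A x →
    ∃ xbar : Fin n → ℝ, Tendsto x atTop (nhds xbar)

/-- Strong convergence: every solution converges to a point of `⋂ᵢ ker(Aᵢ − I)`. -/
def StronglyConvergent {n M : ℕ} (A : Fin M → Matrix (Fin n) (Fin n) ℝ) : Prop :=
  ∀ x : ℕ → Fin n → ℝ, IsInclusionSolution A x →
    ∃ xbar : Fin n → ℝ, (∀ i, (A i - 1) *ᵥ xbar = 0) ∧ Tendsto x atTop (nhds xbar)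

namespace SCaux

variable {n M : ℕ}

lemma amix_add (A : Fin M → Matrix (Fin n) (Fin n) ℝ) (w u : Fin M → ℝ) :
    Amix A (w + u) = Amix A w + Amix A u := by
  simp [Amix, add_smul, Finset.sum_add_distrib]

lemma amix_smul (A : Fin M → Matrix (Fin n) (Fin n) ℝ) (r : ℝ) (w : Fin M → ℝ) :
    Amix A (r • w) = r • Amix A w := by
  simp [Amix, mul_smul, Finset.smul_sum]

lemma amix_single (A : Fin M → Matrix (Fin n) (Fin n) ℝ) (i : Fin M) :
    Amix A (Pi.single i 1) = A i := by
  simp [Amix, Pi.single_apply, ite_smul]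

/-- convex combination as a continuous linear map, linearly in `w`. -/
noncomputable def AmixL (A : Fin M → Matrix (Fin n) (Fin n) ℝ) :
    (Fin M → ℝ) →ₗ[ℝ] ((Fin n → ℝ) →L[ℝ] (Fin n → ℝ)) where
  toFun w := LinearMap.toContinuousLinearMap (Amix A w).mulVecLin
  map_add' w u := by
    ext x
    simp [amix_add, Matrix.add_mulVec]
  map_smul' r w := by
    ext x
    simp [amix_smul, Matrix.smul_mulVec]

lemma AmixL_apply (A : Fin M → Matrix (Fin n) (Fin n) ℝ) (w : Fin M → ℝ) (x : Fin n → ℝ) :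
    AmixL A w x = Amix A w *ᵥ x := rfl

lemma AmixL_single (A : Fin M → Matrix (Fin n) (Fin n) ℝ) (i : Fin M) (x : Fin n → ℝ) :
    AmixL A (Pi.single i 1) x = A i *ᵥ x := by
  rw [AmixL_apply, amix_single]

/-- trajectory of products of matrices along a signal. -/
noncomputable def trajM (A : Fin M → Matrix (Fin n) (Fin n) ℝ) (σ : ℕ → (Fin M → ℝ)) :
    ℕ → ((Fin n → ℝ) →L[ℝ] (Fin n → ℝ))
  | 0 => ContinuousLinearMap.id ℝ _
  | (t+1) => (AmixL A (σ t)).comp (trajM A σ t)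

@[simp] lemma trajM_zero (A : Fin M → Matrix (Fin n) (Fin n) ℝ) (σ) :
    trajM A σ 0 = ContinuousLinearMap.id ℝ _ := rfl

lemma trajM_succ (A : Fin M → Matrix (Fin n) (Fin n) ℝ) (σ) (t : ℕ) :
    trajM A σ (t+1) = (AmixL A (σ t)).comp (trajM A σ t) := rfl

lemma trajM_congr (A : Fin M → Matrix (Fin n) (Fin n) ℝ) {σ σ'} (t : ℕ)
    (hσ : ∀ s, s < t → σ s = σ' s) : trajM A σ t = trajM A σ' t := by
  induction t with
  | zero => rfl
  | succ t ih =>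
    rw [trajM_succ, trajM_succ, hσ t (Nat.lt_succ_self t),
      ih (fun s hs => hσ s (hs.trans (Nat.lt_succ_self t)))]

lemma trajM_shift (A : Fin M → Matrix (Fin n) (Fin n) ℝ) (σ) (t m : ℕ) :
    trajM A σ (t + m) = (trajM A (fun s => σ (t + s)) m).comp (trajM A σ t) := by
  induction m with
  | zero => simp
  | succ m ih =>
    rw [← Nat.add_assoc, trajM_succ, trajM_succ, ih, ContinuousLinearMap.comp_assoc]

lemma trajM_one (A : Fin M → Matrix (Fin n) (Fin n) ℝ) (σ) :
    trajM A σ 1 = AmixL A (σ 0) := by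
  rw [trajM_succ, trajM_zero, ContinuousLinearMap.comp_id]

lemma trajM_peel (A : Fin M → Matrix (Fin n) (Fin n) ℝ) (σ) (t : ℕ) :
    trajM A σ (t + 1) = (trajM A (fun s => σ (s + 1)) t).comp (AmixL A (σ 0)) := by
  have h := trajM_shift A σ 1 t
  rw [Nat.add_comm 1 t] at h
  rw [h, trajM_one]
  congr 1
  exact trajM_congr A t (fun s _ => by simp [Nat.add_comm])

/-- all entries of the signal lie in the simplex -/
def memW (σ : ℕ → (Fin M → ℝ)) : Prop := ∀ k, σ k ∈ stdSimplex ℝ (Fin M)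

lemma single_mem_simplex (i : Fin M) : Pi.single i (1:ℝ) ∈ stdSimplex ℝ (Fin M) := by
  constructor
  · intro j
    rcases eq_or_ne j i with rfl | hj
    · simp
    · simp [Pi.single_apply, hj]
  · simp


section Proj

variable (A : Fin M → Matrix (Fin n) (Fin n) ℝ)
  (pc rc : (Fin n → ℝ) →L[ℝ] (Fin n → ℝ))

lemma pc_eq (hP1 : ∀ x, rc x + pc x = x) (x : Fin n → ℝ) : pc x = x - rc x := by
  have := hP1 x; abel_nf; abel_nf at this; linear_combination (norm := abel) this

lemma pc_rc (hP1 : ∀ x, rc x + pc x = x) (hP2 : ∀ x, rc (rc x) = rc x) (x : Fin n → ℝ) :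
    pc (rc x) = 0 := by
  rw [pc_eq pc rc hP1, hP2, sub_self]

lemma rc_pc (hP1 : ∀ x, rc x + pc x = x) (hP2 : ∀ x, rc (rc x) = rc x) (x : Fin n → ℝ) :
    rc (pc x) = 0 := by
  rw [pc_eq pc rc hP1, map_sub, hP2, sub_self]

lemma pc_idem (hP1 : ∀ x, rc x + pc x = x) (hP2 : ∀ x, rc (rc x) = rc x) (x : Fin n → ℝ) :
    pc (pc x) = pc x := by
  conv_lhs => rw [pc_eq pc rc hP1 (pc x)]
  rw [rc_pc pc rc hP1 hP2, sub_zero]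

lemma fix_trajM (hP3 : ∀ w x, w ∈ stdSimplex ℝ (Fin M) → Amix A w *ᵥ rc x = rc x)
    {σ : ℕ → Fin M → ℝ} (hW : memW σ) (t : ℕ) (x : Fin n → ℝ) :
    trajM A σ t (rc x) = rc x := by
  induction t with
  | zero => rfl
  | succ t ih =>
    rw [trajM_succ, ContinuousLinearMap.comp_apply, ih, AmixL_apply, hP3 _ x (hW t)]

lemma absorb (hP1 : ∀ x, rc x + pc x = x) (hP2 : ∀ x, rc (rc x) = rc x)
    (hP3 : ∀ w x, w ∈ stdSimplex ℝ (Fin M) → Amix A w *ᵥ rc x = rc x)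
    {σ : ℕ → Fin M → ℝ} (hW : memW σ) (t : ℕ) (x : Fin n → ℝ) :
    pc (trajM A σ t (pc x)) = pc (trajM A σ t x) := by
  have h1 : trajM A σ t x - trajM A σ t (pc x) = rc x := by
    rw [← map_sub]
    have hx : x - pc x = rc x := by rw [pc_eq pc rc hP1]; abel
    rw [hx, fix_trajM A rc hP3 hW t x]
  have h2 := congrArg pc h1
  rw [map_sub, pc_rc pc rc hP1 hP2, sub_eq_zero] at h2
  exact h2.symm

end Proj

section Affine

variable (A : Fin M → Matrix (Fin n) (Fin n) ℝ)

lemma traj_affine (σ : ℕ → Fin M → ℝ) (a : ℕ) (c u : Fin M → ℝ) (r : ℝ) (t : ℕ) :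
    trajM A (Function.update σ a (c + r • (u - c))) t
      = trajM A (Function.update σ a c) t
        + r • (trajM A (Function.update σ a u) t - trajM A (Function.update σ a c) t) := by
  induction t with
  | zero => simp
  | succ t ih =>
    rcases eq_or_ne t a with rfl | hta
    · have hcongr : ∀ z z' : Fin M → ℝ,
          trajM A (Function.update σ t z) t = trajM A (Function.update σ t z') t := by
        intro z z'
        exact trajM_congr A t (fun s hs => by
          rw [Function.update_of_ne (Nat.ne_of_lt hs), Function.update_of_ne (Nat.ne_of_lt hs)])
      rw [trajM_succ, trajM_succ, trajM_succ, Function.update_self, Function.update_self,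
        Function.update_self, hcongr (c + r • (u - c)) c, hcongr u c]
      ext z
      simp only [ContinuousLinearMap.comp_apply, ContinuousLinearMap.add_apply,
        ContinuousLinearMap.smul_apply, ContinuousLinearMap.sub_apply, _root_.map_add,
        _root_.map_smul, _root_.map_sub]
    · rw [trajM_succ, trajM_succ, trajM_succ, Function.update_of_ne hta,
        Function.update_of_ne hta, Function.update_of_ne hta, ih]
      ext z
      simp only [ContinuousLinearMap.comp_apply, ContinuousLinearMap.add_apply,
        ContinuousLinearMap.smul_apply, ContinuousLinearMap.sub_apply, _root_.map_add,
        _root_.map_smul, _root_.map_sub]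

lemma simplex_dist_le_one {u v : Fin M → ℝ} (hu : u ∈ stdSimplex ℝ (Fin M))
    (hv : v ∈ stdSimplex ℝ (Fin M)) : dist u v ≤ 1 := by
  refine (dist_pi_le_iff zero_le_one).mpr (fun m => ?_)
  rw [Real.dist_eq, abs_sub_le_iff]
  have hu1 : u m ≤ 1 := by
    calc u m ≤ ∑ j, u j := Finset.single_le_sum (fun j _ => hu.1 j) (Finset.mem_univ m)
    _ = 1 := hu.2
  have hv1 : v m ≤ 1 := by
    calc v m ≤ ∑ j, v j := Finset.single_le_sum (fun j _ => hv.1 j) (Finset.mem_univ m)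
    _ = 1 := hv.2
  constructor <;> linarith [hu.1 m, hv.1 m]

lemma removal {ε : ℝ} (hε : 0 < ε) {N' : ℝ} (c v : Fin M → ℝ)
    (hc : c ∈ stdSimplex ℝ (Fin M)) (hv : v ∈ stdSimplex ℝ (Fin M))
    (σ : ℕ → Fin M → ℝ) (a : ℕ)
    (hyp : ∀ u, u ∈ stdSimplex ℝ (Fin M) → dist u c < ε →
      ∀ t, ‖trajM A (Function.update σ a u) t‖ ≤ N') :
    ∀ t, ‖trajM A (Function.update σ a v) t‖ ≤ N' * (1 + 4/ε) := by
  have hN' : 0 ≤ N' := le_trans (norm_nonneg _) (hyp c hc (by simpa using hε) 0)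
  have h4 : (0:ℝ) ≤ 4/ε := by positivity
  by_cases hd : dist v c < ε
  · intro t; exact le_trans (hyp v hv hd t) (by nlinarith)
  · push_neg at hd
    have hd1 : dist v c ≤ 1 := simplex_dist_le_one hv hc
    have hdpos : 0 < dist v c := lt_of_lt_of_le hε hd
    set s : ℝ := ε / (2 * dist v c) with hs
    have hspos : 0 < s := by positivity
    have hs1 : s ≤ 1/2 := by
      rw [hs, div_le_div_iff₀ (by positivity) (by norm_num)]
      linarith
    set u : Fin M → ℝ := c + s • (v - c) with hu
    have humem : u ∈ stdSimplex ℝ (Fin M) := by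
      have huu : u = (1 - s) • c + s • v := by rw [hu]; module
      rw [huu]
      exact (convex_stdSimplex ℝ (Fin M)) hc hv (by linarith) (le_of_lt hspos) (by ring)
    have hsd : s * dist v c = ε / 2 := by
      rw [hs]; field_simp
    have hduc : dist u c < ε := by
      have : dist u c = s * dist v c := by
        rw [hu, dist_eq_norm, add_sub_cancel_left, norm_smul, Real.norm_eq_abs,
          abs_of_pos hspos, ← dist_eq_norm]
      rw [this, hsd]; linarith
    have hv_eq : c + s⁻¹ • (u - c) = v := by
      rw [hu, add_sub_cancel_left, smul_smul, inv_mul_cancel₀ hspos.ne', one_smul,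
        add_sub_cancel]
    intro t
    have haff := traj_affine A σ a c u s⁻¹ t
    rw [hv_eq] at haff
    rw [haff]
    have hbc := hyp c hc (by simpa using hε) t
    have hbu := hyp u humem hduc t
    have hsinv : s⁻¹ ≤ 2/ε := by
      rw [hs, inv_div]
      rw [div_le_div_iff₀ (by positivity) hε]
      nlinarith
    have hsinvpos : (0:ℝ) < s⁻¹ := by positivity
    calc ‖trajM A (Function.update σ a c) t
          + s⁻¹ • (trajM A (Function.update σ a u) t - trajM A (Function.update σ a c) t)‖
        ≤ ‖trajM A (Function.update σ a c) t‖
          + s⁻¹ * (‖trajM A (Function.update σ a u) t‖ + ‖trajM A (Function.update σ a c) t‖) := by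
          refine le_trans (norm_add_le _ _) (add_le_add le_rfl ?_)
          have hns := norm_smul s⁻¹ (trajM A (Function.update σ a u) t - trajM A (Function.update σ a c) t)
          rw [hns, Real.norm_eq_abs, abs_of_pos hsinvpos]
          exact mul_le_mul_of_nonneg_left (norm_sub_le _ _) (le_of_lt hsinvpos)
      _ ≤ N' + (2/ε) * (N' + N') := by
          refine add_le_add hbc (mul_le_mul hsinv (add_le_add hbu hbc) (by positivity) (by positivity))
      _ = N' * (1 + 4/ε) := by field_simp; ring

lemma removal_finset {ε : ℝ} (hε : 0 < ε) (c : ℕ → Fin M → ℝ)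
    (hc : ∀ j, c j ∈ stdSimplex ℝ (Fin M)) :
    ∀ (S : Finset ℕ) (N' : ℝ),
      (∀ σ, memW σ → (∀ j ∈ S, dist (σ j) (c j) < ε) → ∀ t, ‖trajM A σ t‖ ≤ N') →
      ∀ σ, memW σ → ∀ t, ‖trajM A σ t‖ ≤ N' * (1 + 4/ε) ^ S.card := by
  intro S
  induction S using Finset.induction_on with
  | empty =>
    intro N' hyp σ hW t
    simpa using hyp σ hW (by simp) t
  | @insert a S ha ih =>
    intro N' hyp σ hW t
    have step : ∀ σ', memW σ' → (∀ j ∈ S, dist (σ' j) (c j) < ε) →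
        ∀ t', ‖trajM A σ' t'‖ ≤ N' * (1 + 4/ε) := by
      intro σ' hW' hnear t'
      have hrem := removal A hε (c a) (σ' a) (hc a) (hW' a) σ' a (fun u hu hdu t'' =>
        hyp (Function.update σ' a u)
          (fun k => by
            rcases eq_or_ne k a with rfl | hk
            · rw [Function.update_self]; exact hu
            · rw [Function.update_of_ne hk]; exact hW' k)
          (fun j hj => by
            rcases Finset.mem_insert.mp hj with rfl | hjS
            · rw [Function.update_self]; exact hdu
            · rw [Function.update_of_ne (fun hja => ha (by rw [← hja]; exact hjS))]; exact hnear j hjS)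
          t'')
      rw [Function.update_eq_self] at hrem
      exact hrem t'
    have hfin := ih (N' * (1 + 4/ε)) step σ hW t
    rw [Finset.card_insert_of_notMem ha, pow_succ]
    calc ‖trajM A σ t‖ ≤ N' * (1 + 4/ε) * (1 + 4/ε) ^ S.card := hfin
    _ = N' * ((1 + 4/ε) ^ S.card * (1 + 4/ε)) := by ring

end Affine

lemma inSimplex_of_mem {w : Fin M → ℝ} (hw : w ∈ stdSimplex ℝ (Fin M)) : InSimplex w :=
  ⟨hw.1, hw.2⟩

section Bound

variable (A : Fin M → Matrix (Fin n) (Fin n) ℝ)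

lemma bdd_of_tendsto {f : ℕ → Fin n → ℝ} {a : Fin n → ℝ} (hf : Tendsto f atTop (nhds a)) :
    ∃ C, ∀ k, ‖f k‖ ≤ C := by
  obtain ⟨N, hN⟩ := Metric.tendsto_atTop.mp hf 1 one_pos
  have hne : (Finset.range (N+1)).Nonempty := ⟨0, by simp⟩
  refine ⟨(Finset.range (N+1)).sup' hne (fun k => ‖f k‖) + (‖a‖ + 1), fun k => ?_⟩
  have h1 : (0:ℝ) ≤ ‖a‖ + 1 := by positivity
  have h2 : (0:ℝ) ≤ (Finset.range (N+1)).sup' hne (fun k => ‖f k‖) :=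
    le_trans (norm_nonneg (f 0)) (Finset.le_sup' (fun k => ‖f k‖) (Finset.mem_range.mpr (Nat.succ_pos N)))
  rcases le_or_gt k N with hk | hk
  · exact le_trans (Finset.le_sup' (fun k => ‖f k‖)
      (Finset.mem_range.mpr (Nat.lt_succ_of_le hk))) (by linarith)
  · have hd := hN k (le_of_lt hk)
    rw [dist_eq_norm] at hd
    have h3 : ‖f k‖ ≤ ‖a‖ + 1 := by
      calc ‖f k‖ = ‖f k - a + a‖ := by rw [sub_add_cancel]
      _ ≤ ‖f k - a‖ + ‖a‖ := norm_add_le _ _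
      _ ≤ ‖a‖ + 1 := by linarith
    linarith

lemma opnorm_le_sum_cols (L : (Fin n → ℝ) →L[ℝ] (Fin n → ℝ)) :
    ‖L‖ ≤ ∑ j, ‖L (Pi.single j 1)‖ := by
  refine ContinuousLinearMap.opNorm_le_bound _ (by positivity) (fun x => ?_)
  have hx : L x = ∑ j, x j • L (Pi.single j 1) := by
    have h1 : x = ∑ j, x j • (Pi.single j 1 : Fin n → ℝ) := by
      have h2 := Finset.univ_sum_single x
      have h3 : ∀ j : Fin n, x j • (Pi.single j 1 : Fin n → ℝ) = Pi.single j (x j) := by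
        intro j; funext s; by_cases hsj : s = j <;> simp [Pi.single_apply, hsj]
      rw [Finset.sum_congr rfl (fun j _ => h3 j), h2]
    conv_lhs => rw [h1]
    rw [map_sum]
    exact Finset.sum_congr rfl fun j _ => map_smul L _ _
  rw [hx]
  calc ‖∑ j, x j • L (Pi.single j 1)‖ ≤ ∑ j, ‖x j • L (Pi.single j 1)‖ := norm_sum_le _ _
  _ ≤ ∑ j, ‖L (Pi.single j 1)‖ * ‖x‖ := by
    refine Finset.sum_le_sum fun j _ => ?_
    rw [norm_smul, mul_comm]
    exact mul_le_mul_of_nonneg_left (norm_le_pi_norm x j) (norm_nonneg _)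
  _ = (∑ j, ‖L (Pi.single j 1)‖) * ‖x‖ := (Finset.sum_mul _ _ _).symm

lemma col_solution (σ : ℕ → Fin M → ℝ) (hW : memW σ) (z : Fin n → ℝ) :
    IsInclusionSolution A (fun k => trajM A σ k z) :=
  ⟨σ, fun k => inSimplex_of_mem (hW k), fun k => by
    show trajM A σ (k+1) z = _
    rw [trajM_succ]; rfl⟩

lemma cont_trajM (t : ℕ) :
    Continuous fun σ : ℕ → {w : Fin M → ℝ // w ∈ stdSimplex ℝ (Fin M)} =>
      trajM A (fun k => (σ k : Fin M → ℝ)) t := by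
  induction t with
  | zero => exact continuous_const
  | succ t ih =>
    simp only [trajM_succ]
    exact Continuous.clm_comp ((AmixL A).continuous_of_finiteDimensional.comp
      (continuous_subtype_val.comp (continuous_apply t))) ih

theorem product_bound [Nonempty (Fin M)] (h : StronglyConvergent A) :
    ∃ K : ℝ, 0 ≤ K ∧ ∀ σ, memW σ → ∀ t, ‖trajM A σ t‖ ≤ K := by
  classical
  haveI : CompactSpace {w : Fin M → ℝ // w ∈ stdSimplex ℝ (Fin M)} :=
    isCompact_iff_compactSpace.mp (isCompact_stdSimplex _ _)
  haveI : Nonempty (ℕ → {w : Fin M → ℝ // w ∈ stdSimplex ℝ (Fin M)}) :=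
    ⟨fun _ => ⟨Pi.single (Classical.arbitrary (Fin M)) 1, single_mem_simplex _⟩⟩
  set B : ℕ → Set (ℕ → {w : Fin M → ℝ // w ∈ stdSimplex ℝ (Fin M)}) :=
    fun N => {σ | ∀ t, ‖trajM A (fun k => (σ k : Fin M → ℝ)) t‖ ≤ N} with hB
  have hclosed : ∀ N, IsClosed (B N) := by
    intro N
    have hBi : B N = ⋂ t, {σ : ℕ → {w : Fin M → ℝ // w ∈ stdSimplex ℝ (Fin M)} |
        ‖trajM A (fun k => (σ k : Fin M → ℝ)) t‖ ≤ N} := by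
      ext σ; simp [hB, Set.mem_iInter]
    rw [hBi]
    exact isClosed_iInter fun t => isClosed_le (cont_trajM A t).norm continuous_const
  have hcover : (⋃ N, B N) = Set.univ := by
    rw [Set.eq_univ_iff_forall]
    intro σ
    have hWσ : memW (fun k => (σ k : Fin M → ℝ)) := fun k => (σ k).2
    have hcols : ∀ j : Fin n, ∃ C, ∀ k,
        ‖trajM A (fun k => (σ k : Fin M → ℝ)) k (Pi.single j 1)‖ ≤ C := by
      intro j
      obtain ⟨xbar, _, htend⟩ := h _ (col_solution A _ hWσ (Pi.single j 1))
      exact bdd_of_tendsto htend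
    choose C hC using hcols
    refine Set.mem_iUnion.mpr ⟨⌈∑ j, C j⌉₊, fun t => ?_⟩
    calc ‖trajM A (fun k => (σ k : Fin M → ℝ)) t‖
        ≤ ∑ j, ‖trajM A (fun k => (σ k : Fin M → ℝ)) t (Pi.single j 1)‖ := opnorm_le_sum_cols _
    _ ≤ ∑ j, C j := Finset.sum_le_sum fun j _ => hC j t
    _ ≤ ⌈∑ j, C j⌉₊ := Nat.le_ceil _
  obtain ⟨N, hN⟩ := nonempty_interior_of_iUnion_of_closed hclosed hcover
  obtain ⟨σ₀, hσ₀⟩ := hN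
  have hmem : B N ∈ nhds σ₀ := mem_interior_iff_mem_nhds.mp hσ₀
  rw [nhds_pi] at hmem
  obtain ⟨I, hIfin, U, hU, hsub⟩ := Filter.mem_pi.mp hmem
  choose εf hεf hball using fun j => Metric.mem_nhds_iff.mp (hU j)
  set S := hIfin.toFinset with hSdef
  set ε : ℝ := if hS : S.Nonempty then S.inf' hS εf else 1 with hε
  have hεpos : 0 < ε := by
    rw [hε]; split
    · next hS => exact (Finset.lt_inf'_iff hS).mpr fun j _ => hεf j
    · norm_num
  have hεle : ∀ j ∈ S, ε ≤ εf j := by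
    intro j hj; rw [hε, dif_pos ⟨j, hj⟩]; exact Finset.inf'_le _ hj
  have base : ∀ σ, memW σ → (∀ j ∈ S, dist (σ j) ((σ₀ j : Fin M → ℝ)) < ε) →
      ∀ t, ‖trajM A σ t‖ ≤ N := by
    intro σ hWσ hnear t
    have hmemS : (fun k => (⟨σ k, hWσ k⟩ : {w // w ∈ stdSimplex ℝ (Fin M)})) ∈ Set.pi I U := by
      intro j hj
      apply hball j
      refine Metric.mem_ball.mpr ?_
      rw [Subtype.dist_eq]
      exact lt_of_lt_of_le (hnear j (hIfin.mem_toFinset.mpr hj))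
        (hεle j (hIfin.mem_toFinset.mpr hj))
    exact hsub hmemS t
  have hfin := removal_finset A hεpos (fun j => (σ₀ j : Fin M → ℝ)) (fun j => (σ₀ j).2) S N base
  have h40 : (0:ℝ) ≤ 4/ε := div_nonneg (by norm_num) hεpos.le
  exact ⟨N * (1 + 4/ε) ^ S.card, mul_nonneg (Nat.cast_nonneg N)
    (pow_nonneg (by linarith) _), hfin⟩

end Bound


section SmallT

variable (A : Fin M → Matrix (Fin n) (Fin n) ℝ)
  (pc rc : (Fin n → ℝ) →L[ℝ] (Fin n → ℝ))

theorem exists_T [Nonempty (Fin M)] (h : StronglyConvergent A)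
    (hP1 : ∀ x, rc x + pc x = x) (hP2 : ∀ x, rc (rc x) = rc x)
    (hP3 : ∀ w x, w ∈ stdSimplex ℝ (Fin M) → Amix A w *ᵥ rc x = rc x)
    (hP0 : ∀ xbar : Fin n → ℝ, (∀ i, (A i - 1) *ᵥ xbar = 0) → pc xbar = 0)
    {K : ℝ} (hK0 : 0 ≤ K) (hK : ∀ σ, memW σ → ∀ t, ‖trajM A σ t‖ ≤ K) :
    ∃ T : ℕ, 1 ≤ T ∧ ∀ σ, memW σ → ‖pc.comp (trajM A σ T)‖ ≤ 1/2 := by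
  classical
  haveI : CompactSpace {w : Fin M → ℝ // w ∈ stdSimplex ℝ (Fin M)} :=
    isCompact_iff_compactSpace.mp (isCompact_stdSimplex _ _)
  set δ : ℝ := (2 * (‖pc‖ * K + 1))⁻¹ with hδ
  have hδpos : 0 < δ := by rw [hδ]; positivity
  set U : ℕ → Set (ℕ → {w : Fin M → ℝ // w ∈ stdSimplex ℝ (Fin M)}) :=
    fun t => {σ | ‖pc.comp (trajM A (fun k => (σ k : Fin M → ℝ)) t)‖ < δ} with hU
  have hUopen : ∀ t, IsOpen (U t) :=
    fun t => isOpen_lt (continuous_const.clm_comp (cont_trajM A t)).norm continuous_const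
  have hUcover : Set.univ ⊆ ⋃ t, U t := by
    intro σ _
    have hWσ : memW (fun k => (σ k : Fin M → ℝ)) := fun k => (σ k).2
    have hcols : ∀ j : Fin n, Tendsto
        (fun k => pc (trajM A (fun k => (σ k : Fin M → ℝ)) k (Pi.single j 1)))
        atTop (nhds 0) := by
      intro j
      obtain ⟨xbar, hxbar, htend⟩ := h _ (col_solution A _ hWσ (Pi.single j 1))
      have hcc := (pc.continuous.tendsto xbar).comp htend
      rwa [hP0 xbar hxbar] at hcc
    have hsum : Tendsto
        (fun k => ∑ j, ‖pc (trajM A (fun k => (σ k : Fin M → ℝ)) k (Pi.single j 1))‖)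
        atTop (nhds 0) := by
      have hs := tendsto_finset_sum (Finset.univ) (fun (j : Fin n) (_ : j ∈ Finset.univ) =>
        (hcols j).norm)
      simpa using hs
    obtain ⟨k, hk⟩ := (hsum.eventually_lt_const hδpos).exists
    refine Set.mem_iUnion.mpr ⟨k, ?_⟩
    have hle : ‖pc.comp (trajM A (fun k => (σ k : Fin M → ℝ)) k)‖
        ≤ ∑ j, ‖pc (trajM A (fun k => (σ k : Fin M → ℝ)) k (Pi.single j 1))‖ := by
      have ho := opnorm_le_sum_cols (pc.comp (trajM A (fun k => (σ k : Fin M → ℝ)) k))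
      simpa using ho
    exact lt_of_le_of_lt hle hk
  obtain ⟨F, hF⟩ := IsCompact.elim_finite_subcover isCompact_univ U hUopen hUcover
  refine ⟨F.sup id + 1, Nat.le_add_left 1 _, ?_⟩
  intro σ hWσ
  have hσ'mem : (fun k => (⟨σ k, hWσ k⟩ : {w // w ∈ stdSimplex ℝ (Fin M)})) ∈ ⋃ t ∈ F, U t :=
    hF (Set.mem_univ _)
  obtain ⟨t, htF, hσt⟩ := Set.mem_iUnion₂.mp hσ'mem
  have htT : t ≤ F.sup id := Finset.le_sup (f := id) htF
  have hTm : F.sup id + 1 = t + (F.sup id + 1 - t) := by omega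
  have hδt : ‖pc.comp (trajM A σ t)‖ < δ := hσt
  refine ContinuousLinearMap.opNorm_le_bound _ (by norm_num) (fun z => ?_)
  have hWs : memW (fun s => σ (t + s)) := fun s => hWσ _
  have hdec : trajM A σ (F.sup id + 1)
      = (trajM A (fun s => σ (t + s)) (F.sup id + 1 - t)).comp (trajM A σ t) := by
    conv_lhs => rw [hTm]
    exact trajM_shift A σ t _
  have habs : pc (trajM A σ (F.sup id + 1) z)
      = pc (trajM A (fun s => σ (t + s)) (F.sup id + 1 - t) (pc (trajM A σ t z))) := by
    rw [hdec]
    exact (absorb A pc rc hP1 hP2 hP3 hWs _ (trajM A σ t z)).symm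
  have hδ1 : δ * (2 * (‖pc‖ * K + 1)) = 1 := inv_mul_cancel₀ (by positivity)
  calc ‖(pc.comp (trajM A σ (F.sup id + 1))) z‖
      = ‖pc (trajM A (fun s => σ (t + s)) (F.sup id + 1 - t) (pc (trajM A σ t z)))‖ := by
        rw [ContinuousLinearMap.comp_apply, habs]
  _ ≤ ‖pc‖ * ‖trajM A (fun s => σ (t + s)) (F.sup id + 1 - t) (pc (trajM A σ t z))‖ :=
        pc.le_opNorm _
  _ ≤ ‖pc‖ * (‖trajM A (fun s => σ (t + s)) (F.sup id + 1 - t)‖ * ‖pc (trajM A σ t z)‖) :=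
        mul_le_mul_of_nonneg_left (ContinuousLinearMap.le_opNorm _ _) (norm_nonneg _)
  _ ≤ ‖pc‖ * (K * (δ * ‖z‖)) := by
        refine mul_le_mul_of_nonneg_left ?_ (norm_nonneg _)
        refine mul_le_mul (hK _ hWs _) ?_ (norm_nonneg _) hK0
        calc ‖pc (trajM A σ t z)‖ = ‖(pc.comp (trajM A σ t)) z‖ := by
              rw [ContinuousLinearMap.comp_apply]
        _ ≤ ‖pc.comp (trajM A σ t)‖ * ‖z‖ := ContinuousLinearMap.le_opNorm _ _
        _ ≤ δ * ‖z‖ := mul_le_mul_of_nonneg_right hδt.le (norm_nonneg _)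
  _ ≤ 1/2 * ‖z‖ := by nlinarith [norm_nonneg z, norm_nonneg pc, hK0, hδpos.le, hδ1]

end SmallT

section ConstructionDefs

variable (A : Fin M → Matrix (Fin n) (Fin n) ℝ)
  (pc rc : (Fin n → ℝ) →L[ℝ] (Fin n → ℝ))

lemma sum_mulVec {ι : Type*} [DecidableEq ι] (s : Finset ι) (B : ι → Matrix (Fin n) (Fin n) ℝ)
    (z : Fin n → ℝ) : (∑ i ∈ s, B i) *ᵥ z = ∑ i ∈ s, B i *ᵥ z := by
  induction s using Finset.induction_on with
  | empty => simp [Matrix.zero_mulVec]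
  | @insert a s ha ih => rw [Finset.sum_insert ha, Finset.sum_insert ha, Matrix.add_mulVec, ih]

lemma pi_decomp (x : Fin n → ℝ) : x = ∑ j, x j • (Pi.single j 1 : Fin n → ℝ) := by
  have h2 := Finset.univ_sum_single x
  have h3 : ∀ j : Fin n, x j • (Pi.single j 1 : Fin n → ℝ) = Pi.single j (x j) := by
    intro j; funext s; by_cases hsj : s = j <;> simp [Pi.single_apply, hsj]
  rw [Finset.sum_congr rfl (fun j _ => h3 j), h2]

/-- vertex signal -/
def vsig (σd : ℕ → Fin M) : ℕ → (Fin M → ℝ) := fun k => Pi.single (σd k) 1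

lemma memW_vsig (σd : ℕ → Fin M) : memW (vsig σd) := fun _ => single_mem_simplex _

noncomputable def vecOf (L : (Fin n → ℝ) →L[ℝ] (Fin n → ℝ)) (t : Fin n) : Fin n → ℝ :=
  fun s => L (Pi.single s 1) t

lemma vecOf_dot (L : (Fin n → ℝ) →L[ℝ] (Fin n → ℝ)) (t : Fin n) (x : Fin n → ℝ) :
    vecOf L t ⬝ᵥ x = L x t := by
  conv_rhs => rw [pi_decomp x, map_sum]
  rw [Finset.sum_apply]
  simp only [dotProduct, vecOf]
  exact Finset.sum_congr rfl fun j _ => by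
    rw [_root_.map_smul]
    simp [mul_comm]

def extv (i₀ : Fin M) (ℓ : ℕ) (v : Fin ℓ → Fin M) : ℕ → Fin M :=
  fun s => if h : s < ℓ then v ⟨s, h⟩ else i₀

def consd (i : Fin M) (σd : ℕ → Fin M) : ℕ → Fin M
  | 0 => i
  | (s+1) => σd s

lemma trajM_vpeel (i : Fin M) (σd : ℕ → Fin M) (ℓ : ℕ) :
    trajM A (vsig (consd i σd)) (ℓ+1) = (trajM A (vsig σd) ℓ).comp (AmixL A (Pi.single i 1)) := by
  rw [trajM_peel]
  rfl

noncomputable def Wb (i₀ : Fin M) (ℓ : ℕ) (v : Fin ℓ → Fin M) :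
    (Fin n → ℝ) →L[ℝ] (Fin n → ℝ) :=
  pc.comp ((trajM A (vsig (extv i₀ ℓ v)) ℓ).comp pc)

abbrev JHidx (n M T : ℕ) : Type := ((Σ ℓ : Fin T, (Fin (ℓ:ℕ) → Fin M)) × Fin n)

abbrev FIidx (n M T : ℕ) : Type := Fin n × (JHidx n M T × Bool)

noncomputable def hfun (i₀ : Fin M) (T : ℕ) (β : ℝ) (j : JHidx n M T) : Fin n → ℝ :=
  (β ^ (j.1.1 : ℕ))⁻¹ • vecOf (Wb A pc i₀ (j.1.1 : ℕ) j.1.2) j.2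

noncomputable def gfun (t : Fin n) : Fin n → ℝ := vecOf rc t

noncomputable def Ffun (i₀ : Fin M) (T : ℕ) (β lam : ℝ) (k : FIidx n M T) : Fin n → ℝ :=
  gfun rc k.1 + (if k.2.2 then lam else -lam) • hfun A pc i₀ T β k.2.1

lemma hfun_dot (i₀ : Fin M) (T : ℕ) (β : ℝ) (j : JHidx n M T) (x : Fin n → ℝ) :
    hfun A pc i₀ T β j ⬝ᵥ x
      = (β ^ (j.1.1 : ℕ))⁻¹ * pc (trajM A (vsig (extv i₀ (j.1.1 : ℕ) j.1.2)) (j.1.1 : ℕ) (pc x)) j.2 := by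
  rw [hfun, smul_dotProduct, vecOf_dot]
  rfl

lemma gfun_dot (t : Fin n) (x : Fin n → ℝ) : gfun rc t ⬝ᵥ x = rc x t := vecOf_dot rc t x

lemma Ffun_dot (i₀ : Fin M) (T : ℕ) (β lam : ℝ) (k : FIidx n M T) (x : Fin n → ℝ) :
    Ffun A pc rc i₀ T β lam k ⬝ᵥ x
      = gfun rc k.1 ⬝ᵥ x + (if k.2.2 then lam else -lam) * (hfun A pc i₀ T β k.2.1 ⬝ᵥ x) := by
  rw [Ffun, add_dotProduct, smul_dotProduct]
  rfl

lemma habs_add (a b : ℝ) (hab : 0 ≤ a * b) : |a + b| = |a| + |b| := by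
  rcases le_or_gt 0 a with ha | ha <;> rcases le_or_gt 0 b with hb | hb
  · rw [abs_of_nonneg ha, abs_of_nonneg hb, abs_of_nonneg (by linarith)]
  · have ha0 : a = 0 := by nlinarith
    subst ha0; simp
  · have hb0 : b = 0 := by nlinarith
    subst hb0; simp
  · rw [abs_of_neg ha, abs_of_neg hb, abs_of_neg (by linarith)]; ring

end ConstructionDefs

section Main

variable (A : Fin M → Matrix (Fin n) (Fin n) ℝ)
  (pc rc : (Fin n → ℝ) →L[ℝ] (Fin n → ℝ))

theorem main_construction [Nonempty (Fin n)] [Nonempty (Fin M)]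
    (hP1 : ∀ x, rc x + pc x = x) (hP2 : ∀ x, rc (rc x) = rc x)
    (hP3 : ∀ w x, w ∈ stdSimplex ℝ (Fin M) → Amix A w *ᵥ rc x = rc x)
    (T : ℕ) (hT1 : 1 ≤ T)
    (hhalf : ∀ σ, memW σ → ‖pc.comp (trajM A σ T)‖ ≤ 1/2) :
    ∃ (s : ℕ) (f : Fin s → Fin n → ℝ),
      Submodule.span ℝ (Set.range f) = ⊤ ∧
      ∀ (i : Fin M) (x : Fin n → ℝ),
        (⨆ j : Fin s, |f j ⬝ᵥ ((A i) *ᵥ x)|) ≤ ⨆ j : Fin s, |f j ⬝ᵥ x| := by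
  classical
  set i₀ : Fin M := Classical.arbitrary _ with hi₀
  have hTpos : (0:ℝ) < (T:ℝ) := by exact_mod_cast Nat.lt_of_lt_of_le Nat.zero_lt_one hT1
  set β : ℝ := (1/2 : ℝ) ^ ((T:ℝ)⁻¹) with hβ
  have hβpos : 0 < β := Real.rpow_pos_of_pos (by norm_num) _
  have hβlt1 : β < 1 := Real.rpow_lt_one (by norm_num) (by norm_num) (by positivity)
  have hβT : β ^ T = 1/2 := by
    rw [hβ, ← Real.rpow_natCast ((1/2:ℝ) ^ ((T:ℝ)⁻¹)) T, ← Real.rpow_mul (by norm_num),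
      inv_mul_cancel₀ (ne_of_gt hTpos), Real.rpow_one]
  have hpcr : ∀ x, pc (rc x) = 0 := pc_rc pc rc hP1 hP2
  have hpcidem : ∀ x, pc (pc x) = pc x := pc_idem pc rc hP1 hP2
  have hAfix : ∀ (i : Fin M) x, A i *ᵥ rc x = rc x := by
    intro i x
    have hfix := hP3 (Pi.single i 1) x (single_mem_simplex i)
    rwa [amix_single] at hfix
  have hAdec : ∀ (i : Fin M) x, A i *ᵥ x = rc x + A i *ᵥ (pc x) := by
    intro i x
    conv_lhs => rw [← hP1 x]
    rw [Matrix.mulVec_add, hAfix]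
  have hπA : ∀ (i : Fin M) x, pc (A i *ᵥ x) = pc (A i *ᵥ (pc x)) := by
    intro i x
    rw [hAdec i x, map_add, hpcr, zero_add]
  have hrcA : ∀ (i : Fin M) x, rc (A i *ᵥ x) = rc x + rc (A i *ᵥ (pc x)) := by
    intro i x
    rw [hAdec i x, map_add, hP2]
  haveI hJHne : Nonempty (JHidx n M T) :=
    ⟨⟨⟨⟨0, hT1⟩, fun z => z.elim0⟩, Classical.arbitrary _⟩⟩
  set Hm : (Fin n → ℝ) → ℝ := fun x =>
    Finset.univ.sup' Finset.univ_nonempty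
      (fun j : JHidx n M T => |hfun A pc i₀ T β j ⬝ᵥ x|) with hHm
  set Gm : (Fin n → ℝ) → ℝ := fun x =>
    Finset.univ.sup' Finset.univ_nonempty (fun t : Fin n => |gfun rc t ⬝ᵥ x|) with hGm
  have hHmle : ∀ (j : JHidx n M T) x, |hfun A pc i₀ T β j ⬝ᵥ x| ≤ Hm x := by
    intro j x
    exact Finset.le_sup' (fun j : JHidx n M T => |hfun A pc i₀ T β j ⬝ᵥ x|) (Finset.mem_univ j)
  have hGmle : ∀ (t : Fin n) x, |gfun rc t ⬝ᵥ x| ≤ Gm x := by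
    intro t x
    exact Finset.le_sup' (fun t : Fin n => |gfun rc t ⬝ᵥ x|) (Finset.mem_univ t)
  have hHm0 : ∀ x, 0 ≤ Hm x := fun x => le_trans (abs_nonneg _) (hHmle (Classical.arbitrary _) x)
  have hGm0 : ∀ x, 0 ≤ Gm x := fun x => le_trans (abs_nonneg _) (hGmle (Classical.arbitrary _) x)
  have hzero : ∀ (t : Fin n) x,
      hfun A pc i₀ T β (⟨⟨⟨0, hT1⟩, fun z => z.elim0⟩, t⟩) ⬝ᵥ x = pc x t := by
    intro t x
    rw [hfun_dot]
    show (β ^ (0:ℕ))⁻¹ * pc (trajM A (vsig (extv i₀ 0 (fun z => z.elim0))) 0 (pc x)) t = pc x t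
    rw [trajM_zero]
    simp [hpcidem]
  have hpcHm : ∀ x, ‖pc x‖ ≤ Hm x := by
    intro x
    refine (pi_norm_le_iff_of_nonneg (hHm0 x)).mpr (fun t => ?_)
    rw [Real.norm_eq_abs, ← hzero t x]
    exact hHmle _ x
  -- contraction of the H-functionals
  have hcontr : ∀ (j : JHidx n M T) (i : Fin M) x,
      |hfun A pc i₀ T β j ⬝ᵥ ((A i) *ᵥ x)| ≤ β * Hm x := by
    rintro ⟨⟨ℓ, v⟩, t⟩ i x
    rw [hfun_dot]
    have e1 : pc (trajM A (vsig (extv i₀ ((ℓ : ℕ)) v)) ((ℓ : ℕ)) (pc (A i *ᵥ x)))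
        = pc (trajM A (vsig (consd i (extv i₀ ((ℓ : ℕ)) v))) ((ℓ : ℕ)+1) (pc x)) := by
      rw [hπA i x]
      rw [absorb A pc rc hP1 hP2 hP3 (memW_vsig _) ((ℓ : ℕ)) (A i *ᵥ (pc x))]
      rw [trajM_vpeel A i _ ((ℓ : ℕ)), ContinuousLinearMap.comp_apply, AmixL_single]
    rw [e1]
    have hsucc : (ℓ : ℕ) + 1 ≤ T := ℓ.isLt
    rcases lt_or_eq_of_le hsucc with hlt | heq
    · set j' : JHidx n M T := ⟨⟨⟨(ℓ : ℕ)+1, hlt⟩, Fin.cons i v⟩, t⟩ with hj'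
      have e2 : trajM A (vsig (consd i (extv i₀ ((ℓ : ℕ)) v))) ((ℓ : ℕ)+1)
          = trajM A (vsig (extv i₀ ((ℓ : ℕ)+1) (Fin.cons i v))) ((ℓ : ℕ)+1) := by
        apply trajM_congr
        intro s hs
        have harg : consd i (extv i₀ ((ℓ : ℕ)) v) s = extv i₀ ((ℓ : ℕ)+1) (Fin.cons i v) s := by
          cases s with
          | zero => simp [consd, extv]
          | succ s' =>
            have hs' : s' < (ℓ : ℕ) := by omega
            simp only [consd, extv, dif_pos hs', dif_pos (Nat.succ_lt_succ hs')]
            exact (Fin.cons_succ (α := fun _ => Fin M) i v ⟨s', hs'⟩).symm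
        show vsig (consd i (extv i₀ ((ℓ : ℕ)) v)) s = vsig (extv i₀ ((ℓ : ℕ)+1) (Fin.cons i v)) s
        unfold vsig
        rw [harg]
      have hval : hfun A pc i₀ T β j' ⬝ᵥ x
          = (β ^ ((ℓ : ℕ)+1))⁻¹
            * pc (trajM A (vsig (consd i (extv i₀ ((ℓ : ℕ)) v))) ((ℓ : ℕ)+1) (pc x)) t := by
        rw [hfun_dot, ← e2]
      have hXalg : |(β ^ (ℓ : ℕ))⁻¹
            * pc (trajM A (vsig (consd i (extv i₀ ((ℓ : ℕ)) v))) ((ℓ : ℕ)+1) (pc x)) t|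
          = β * |hfun A pc i₀ T β j' ⬝ᵥ x| := by
        rw [hval, abs_mul, abs_mul,
          abs_of_pos (inv_pos.mpr (pow_pos hβpos _)),
          abs_of_pos (inv_pos.mpr (pow_pos hβpos _)), pow_succ]
        field_simp
      rw [hXalg]
      exact mul_le_mul_of_nonneg_left (hHmle j' x) hβpos.le
    · have hX : |pc (trajM A (vsig (consd i (extv i₀ ((ℓ : ℕ)) v))) ((ℓ : ℕ)+1) (pc x)) t|
          ≤ (1/2) * Hm x := by
        have h1 : |pc (trajM A (vsig (consd i (extv i₀ ((ℓ : ℕ)) v))) ((ℓ : ℕ)+1) (pc x)) t|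
            ≤ ‖pc (trajM A (vsig (consd i (extv i₀ ((ℓ : ℕ)) v))) ((ℓ : ℕ)+1) (pc x))‖ := by
          rw [← Real.norm_eq_abs]
          exact norm_le_pi_norm _ t
        have h2 : ‖pc (trajM A (vsig (consd i (extv i₀ ((ℓ : ℕ)) v))) ((ℓ : ℕ)+1) (pc x))‖
            ≤ ‖pc.comp (trajM A (vsig (consd i (extv i₀ ((ℓ : ℕ)) v))) ((ℓ : ℕ)+1))‖ * ‖pc x‖ := by
          have h2' := (pc.comp
            (trajM A (vsig (consd i (extv i₀ ((ℓ : ℕ)) v))) ((ℓ : ℕ)+1))).le_opNorm (pc x)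
          simpa using h2'
        have h3 : ‖pc.comp (trajM A (vsig (consd i (extv i₀ ((ℓ : ℕ)) v))) ((ℓ : ℕ)+1))‖
            ≤ 1/2 := by
          rw [heq]
          exact hhalf _ (memW_vsig _)
        refine le_trans h1 (le_trans h2 ?_)
        exact mul_le_mul h3 (hpcHm x) (norm_nonneg _) (by norm_num)
      have hXalg : |(β ^ (ℓ : ℕ))⁻¹
            * pc (trajM A (vsig (consd i (extv i₀ ((ℓ : ℕ)) v))) ((ℓ : ℕ)+1) (pc x)) t|
          = (β ^ (ℓ : ℕ))⁻¹
            * |pc (trajM A (vsig (consd i (extv i₀ ((ℓ : ℕ)) v))) ((ℓ : ℕ)+1) (pc x)) t| := by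
        rw [abs_mul, abs_of_pos (inv_pos.mpr (pow_pos hβpos _))]
      rw [hXalg]
      have hβℓ1 : β ^ ((ℓ : ℕ)+1) = 1/2 := by
        rw [heq]
        exact hβT
      have hhalfβ : (1/2 : ℝ) = β ^ (ℓ : ℕ) * β := by
        rw [← hβℓ1, pow_succ]
      calc (β ^ (ℓ : ℕ))⁻¹
            * |pc (trajM A (vsig (consd i (extv i₀ ((ℓ : ℕ)) v))) ((ℓ : ℕ)+1) (pc x)) t|
          ≤ (β ^ (ℓ : ℕ))⁻¹ * ((1/2) * Hm x) :=
            mul_le_mul_of_nonneg_left hX (inv_nonneg.mpr (pow_nonneg hβpos.le _))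
      _ = β * Hm x := by
          rw [hhalfβ]
          have hβℓ : β ^ (ℓ : ℕ) ≠ 0 := ne_of_gt (pow_pos hβpos _)
          field_simp
  -- G-estimate
  set C0 : ℝ := Finset.univ.sup' Finset.univ_nonempty
      (fun i : Fin M => ‖rc.comp (AmixL A (Pi.single i 1))‖) with hC0def
  have hC0le : ∀ i : Fin M, ‖rc.comp (AmixL A (Pi.single i 1))‖ ≤ C0 :=
    fun i => Finset.le_sup' (fun i : Fin M => ‖rc.comp (AmixL A (Pi.single i 1))‖)
      (Finset.mem_univ i)
  have hC00 : 0 ≤ C0 := le_trans (norm_nonneg _) (hC0le (Classical.arbitrary _))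
  have hgest : ∀ (t : Fin n) (i : Fin M) x,
      |gfun rc t ⬝ᵥ ((A i) *ᵥ x)| ≤ Gm x + C0 * Hm x := by
    intro t i x
    rw [gfun_dot, hrcA i x]
    calc |(rc x + rc (A i *ᵥ (pc x))) t|
        ≤ |rc x t| + |rc (A i *ᵥ (pc x)) t| := by
          rw [Pi.add_apply]
          exact abs_add_le _ _
    _ ≤ Gm x + C0 * Hm x := by
        refine add_le_add ?_ ?_
        · rw [← gfun_dot rc t x]
          exact hGmle t x
        · have h1 : |rc (A i *ᵥ (pc x)) t| ≤ ‖rc (A i *ᵥ (pc x))‖ := by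
            rw [← Real.norm_eq_abs]
            exact norm_le_pi_norm _ t
          have h2 : rc (A i *ᵥ (pc x)) = (rc.comp (AmixL A (Pi.single i 1))) (pc x) := by
            rw [ContinuousLinearMap.comp_apply, AmixL_single]
          have h3 : ‖(rc.comp (AmixL A (Pi.single i 1))) (pc x)‖ ≤ C0 * Hm x := by
            refine le_trans (ContinuousLinearMap.le_opNorm _ _) ?_
            exact mul_le_mul (hC0le i) (hpcHm x) (norm_nonneg _) hC00
          have h3' : ‖rc (A i *ᵥ (pc x))‖ ≤ C0 * Hm x := by
            rw [h2]
            exact h3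
          exact le_trans h1 h3'
  have hβ1 : 0 < 1 - β := by linarith
  set lam : ℝ := C0 / (1 - β) + 1 with hlam
  have hlam1 : (1:ℝ) ≤ lam := le_add_of_nonneg_left (div_nonneg hC00 hβ1.le)
  have hlam0 : (0:ℝ) < lam := lt_of_lt_of_le one_pos hlam1
  have hkey : C0 + lam * β ≤ lam := by
    have hexp : lam * (1 - β) = C0 + (1 - β) := by
      rw [hlam]
      field_simp
    nlinarith
  -- the functionals
  set e := Fintype.equivFin (FIidx n M T) with he
  set f : Fin (Fintype.card (FIidx n M T)) → (Fin n → ℝ) :=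
    fun k => Ffun A pc rc i₀ T β lam (e.symm k) with hf
  refine ⟨_, f, ?_, ?_⟩
  · -- spanning
    rw [eq_top_iff]
    rintro x -
    have hmemF : ∀ k : FIidx n M T,
        Ffun A pc rc i₀ T β lam k ∈ Submodule.span ℝ (Set.range f) := by
      intro k
      apply Submodule.subset_span
      exact ⟨e k, by simp [hf]⟩
    have hgmem : ∀ t : Fin n, gfun rc t ∈ Submodule.span ℝ (Set.range f) := by
      intro t
      have hgf : gfun rc t = (1/2 : ℝ) •
          (Ffun A pc rc i₀ T β lam (t, (Classical.arbitrary _, true))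
            + Ffun A pc rc i₀ T β lam (t, (Classical.arbitrary _, false))) := by
        funext s'
        simp [Ffun]
        ring
      rw [hgf]
      exact Submodule.smul_mem _ _ (Submodule.add_mem _ (hmemF _) (hmemF _))
    have hhmem : ∀ j : JHidx n M T, hfun A pc i₀ T β j ∈ Submodule.span ℝ (Set.range f) := by
      intro j
      have hhf : hfun A pc i₀ T β j = lam⁻¹ •
          (Ffun A pc rc i₀ T β lam (Classical.arbitrary _, (j, true))
            - gfun rc (Classical.arbitrary _)) := by
        funext s'
        simp [Ffun]
        field_simp
      rw [hhf]
      exact Submodule.smul_mem _ _ (Submodule.sub_mem _ (hmemF _) (hgmem _))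
    have hsingle : ∀ t : Fin n,
        (Pi.single t 1 : Fin n → ℝ) ∈ Submodule.span ℝ (Set.range f) := by
      intro t
      have hdecomp : (Pi.single t 1 : Fin n → ℝ)
          = gfun rc t + hfun A pc i₀ T β ⟨⟨⟨0, hT1⟩, fun z => z.elim0⟩, t⟩ := by
        funext s'
        have hg' : gfun rc t s' = rc (Pi.single s' 1) t := rfl
        have hh' : hfun A pc i₀ T β (⟨⟨⟨0, hT1⟩, fun z => z.elim0⟩, t⟩) s'
            = pc (Pi.single s' 1) t := by
          show (β ^ (0:ℕ))⁻¹ • vecOf (Wb A pc i₀ 0 (fun z => z.elim0)) t s'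
              = pc (Pi.single s' 1) t
          rw [pow_zero, inv_one, one_smul]
          show (pc.comp ((trajM A (vsig (extv i₀ 0 (fun z => z.elim0))) 0).comp pc))
              (Pi.single s' 1) t = pc (Pi.single s' 1) t
          rw [trajM_zero]
          simp [hpcidem]
        rw [Pi.add_apply, hg', hh',
          ← Pi.add_apply (rc (Pi.single s' 1)) (pc (Pi.single s' 1)), hP1]
        by_cases hst : s' = t <;> simp [Pi.single_apply, hst, eq_comm]
      rw [hdecomp]
      exact Submodule.add_mem _ (hgmem t) (hhmem _)
    have hsummem : ∑ t, x t • (Pi.single t 1 : Fin n → ℝ) ∈ Submodule.span ℝ (Set.range f) :=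
      Submodule.sum_mem _ (fun t _ => Submodule.smul_mem _ _ (hsingle t))
    rwa [← pi_decomp x] at hsummem
  · -- the Lyapunov inequality
    intro i x
    haveI : Nonempty (Fin (Fintype.card (FIidx n M T))) := ⟨e (Classical.arbitrary _)⟩
    have hbdd : BddAbove (Set.range fun k => |f k ⬝ᵥ x|) := (Set.finite_range _).bddAbove
    obtain ⟨ts, _, hGt⟩ := Finset.exists_mem_eq_sup' (Finset.univ_nonempty)
      (fun t : Fin n => |gfun rc t ⬝ᵥ x|)
    obtain ⟨js, _, hHj⟩ := Finset.exists_mem_eq_sup' (Finset.univ_nonempty)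
      (fun j : JHidx n M T => |hfun A pc i₀ T β j ⬝ᵥ x|)
    have hGts : Gm x = |gfun rc ts ⬝ᵥ x| := by rw [hGm]; exact hGt
    have hHjs : Hm x = |hfun A pc i₀ T β js ⬝ᵥ x| := by rw [hHm]; exact hHj
    set bb : Bool := decide (0 ≤ (gfun rc ts ⬝ᵥ x) * (hfun A pc i₀ T β js ⬝ᵥ x)) with hbb
    have hsign : |gfun rc ts ⬝ᵥ x + (if bb then lam else -lam) * (hfun A pc i₀ T β js ⬝ᵥ x)|
        = |gfun rc ts ⬝ᵥ x| + lam * |hfun A pc i₀ T β js ⬝ᵥ x| := by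
      by_cases hb : 0 ≤ (gfun rc ts ⬝ᵥ x) * (hfun A pc i₀ T β js ⬝ᵥ x)
      · have hbbt : bb = true := by simp [hbb, hb]
        rw [hbbt, if_pos rfl]
        rw [habs_add _ _ (by nlinarith [hlam0.le])]
        rw [abs_mul, abs_of_pos hlam0]
      · push_neg at hb
        have hbbf : bb = false := by simp [hbb, not_le.mpr hb]
        rw [hbbf]
        simp only [Bool.false_eq_true, if_false]
        rw [habs_add _ _ (by nlinarith [hlam0.le])]
        rw [abs_mul, abs_neg, abs_of_pos hlam0]
    have hmax : Gm x + lam * Hm x ≤ ⨆ k, |f k ⬝ᵥ x| := by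
      have hfe : f (e (ts, (js, bb))) = Ffun A pc rc i₀ T β lam (ts, (js, bb)) := by
        simp [hf]
      have hval : |f (e (ts, (js, bb))) ⬝ᵥ x| = Gm x + lam * Hm x := by
        rw [hfe, Ffun_dot]
        show |gfun rc ts ⬝ᵥ x + (if bb then lam else -lam) * (hfun A pc i₀ T β js ⬝ᵥ x)| = _
        rw [hsign, ← hGts, ← hHjs]
      rw [← hval]
      exact le_ciSup hbdd _
    refine ciSup_le (fun k => ?_)
    have habsif : |(if (e.symm k).2.2 then lam else -lam)| = lam := by
      split
      · exact abs_of_pos hlam0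
      · rw [abs_neg]; exact abs_of_pos hlam0
    have hgoal : |Ffun A pc rc i₀ T β lam (e.symm k) ⬝ᵥ ((A i) *ᵥ x)| ≤ ⨆ k, |f k ⬝ᵥ x| := by
      rw [Ffun_dot]
      calc |gfun rc (e.symm k).1 ⬝ᵥ ((A i) *ᵥ x)
            + (if (e.symm k).2.2 then lam else -lam)
              * (hfun A pc i₀ T β (e.symm k).2.1 ⬝ᵥ ((A i) *ᵥ x))|
          ≤ |gfun rc (e.symm k).1 ⬝ᵥ ((A i) *ᵥ x)|
            + lam * |hfun A pc i₀ T β (e.symm k).2.1 ⬝ᵥ ((A i) *ᵥ x)| := by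
            refine le_trans (abs_add_le _ _) ?_
            rw [abs_mul, habsif]
      _ ≤ (Gm x + C0 * Hm x) + lam * (β * Hm x) :=
            add_le_add (hgest _ i x) (mul_le_mul_of_nonneg_left (hcontr _ i x) hlam0.le)
      _ ≤ Gm x + lam * Hm x := by nlinarith [hHm0 x, hkey]
      _ ≤ ⨆ k, |f k ⬝ᵥ x| := hmax
    exact hgoal

end Main

end SCaux

/-- strong convergence implies the existence of a weak polyhedral
Lyapunov function `V(x) = max_j |⟨f_j, x⟩|` with the `f_j` spanning `ℝⁿ`. -/
theorem strong_convergence_implies_wPLF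
    (n M : ℕ) (A : Fin M → Matrix (Fin n) (Fin n) ℝ)
    (h : StronglyConvergent A) :
    ∃ (s : ℕ) (f : Fin s → Fin n → ℝ),
      Submodule.span ℝ (Set.range f) = ⊤ ∧
      ∀ (i : Fin M) (x : Fin n → ℝ),
        (⨆ j : Fin s, |f j ⬝ᵥ ((A i) *ᵥ x)|) ≤ ⨆ j : Fin s, |f j ⬝ᵥ x| := by
  classical
  rcases Nat.eq_zero_or_pos n with hn | hn
  · subst hn
    refine ⟨0, fun j => j.elim0, ?_, ?_⟩
    · rw [eq_top_iff]
      rintro x -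
      have hx : x = 0 := Subsingleton.elim x 0
      rw [hx]
      exact Submodule.zero_mem _
    · intro i x
      simp [Real.iSup_of_isEmpty]
  rcases Nat.eq_zero_or_pos M with hM | hM
  · subst hM
    refine ⟨n, fun j => Pi.single j 1, ?_, fun i => i.elim0⟩
    rw [eq_top_iff]
    rintro x -
    have hsm : ∑ t, x t • (Pi.single t 1 : Fin n → ℝ) ∈
        Submodule.span ℝ (Set.range fun j : Fin n => (Pi.single j 1 : Fin n → ℝ)) :=
      Submodule.sum_mem _ (fun t _ => Submodule.smul_mem _ _ (Submodule.subset_span ⟨t, rfl⟩))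
    rwa [← SCaux.pi_decomp x] at hsm
  haveI : Nonempty (Fin n) := ⟨⟨0, hn⟩⟩
  haveI : Nonempty (Fin M) := ⟨⟨0, hM⟩⟩
  set X : Submodule ℝ (Fin n → ℝ) :=
    ⨅ i : Fin M, LinearMap.ker ((A i).mulVecLin - LinearMap.id) with hX
  have hmemX : ∀ z, z ∈ X ↔ ∀ i, A i *ᵥ z = z := by
    intro z
    simp [hX, Submodule.mem_iInf, LinearMap.mem_ker, LinearMap.sub_apply,
      Matrix.mulVecLin_apply, sub_eq_zero]
  obtain ⟨R, hcompl⟩ := Submodule.exists_isCompl X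
  set rcL : (Fin n → ℝ) →ₗ[ℝ] (Fin n → ℝ) :=
    X.subtype.comp (X.linearProjOfIsCompl R hcompl) with hrcL
  set rc : (Fin n → ℝ) →L[ℝ] (Fin n → ℝ) := LinearMap.toContinuousLinearMap rcL with hrc
  set pc : (Fin n → ℝ) →L[ℝ] (Fin n → ℝ) := ContinuousLinearMap.id ℝ _ - rc with hpc
  have hrc_apply : ∀ x, rc x = ((X.linearProjOfIsCompl R hcompl) x : Fin n → ℝ) := fun x => rfl
  have hrcmem : ∀ x, rc x ∈ X := fun x => ((X.linearProjOfIsCompl R hcompl) x).2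
  have hrcfix : ∀ z, z ∈ X → rc z = z := by
    intro z hz
    have hzz := Submodule.linearProjOfIsCompl_apply_left hcompl (⟨z, hz⟩ : X)
    rw [hrc_apply]
    exact congrArg Subtype.val hzz
  have hP1 : ∀ x, rc x + pc x = x := by
    intro x
    rw [hpc, ContinuousLinearMap.sub_apply, ContinuousLinearMap.id_apply]
    abel
  have hP2 : ∀ x, rc (rc x) = rc x := fun x => hrcfix _ (hrcmem x)
  have hP3 : ∀ w x, w ∈ stdSimplex ℝ (Fin M) → Amix A w *ᵥ rc x = rc x := by
    intro w x hw
    have hz : ∀ i, A i *ᵥ rc x = rc x := (hmemX _).mp (hrcmem x)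
    calc Amix A w *ᵥ rc x = ∑ i, w i • (A i *ᵥ rc x) := by
          rw [Amix, SCaux.sum_mulVec]
          exact Finset.sum_congr rfl fun i _ => Matrix.smul_mulVec _ _ _
    _ = ∑ i, w i • rc x := Finset.sum_congr rfl fun i _ => by rw [hz i]
    _ = (∑ i, w i) • rc x := (Finset.sum_smul).symm
    _ = rc x := by rw [hw.2, one_smul]
  have hP0 : ∀ xbar : Fin n → ℝ, (∀ i, (A i - 1) *ᵥ xbar = 0) → pc xbar = 0 := by
    intro xbar hxbar
    have hmem : xbar ∈ X := by
      rw [hmemX]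
      intro i
      have hi := hxbar i
      rwa [Matrix.sub_mulVec, Matrix.one_mulVec, sub_eq_zero] at hi
    rw [hpc, ContinuousLinearMap.sub_apply, ContinuousLinearMap.id_apply,
      hrcfix xbar hmem, sub_self]
  obtain ⟨K, hK0, hK⟩ := SCaux.product_bound A h
  obtain ⟨T, hT1, hhalf⟩ := SCaux.exists_T A pc rc h hP1 hP2 hP3 hP0 hK0 hK
  exact SCaux.main_construction A pc rc hP1 hP2 hP3 T hT1 hhalf
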